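/- Define on dual vectors the function ‖x_s + x_i ε‖ := ‖x_s‖ + D_{x_i}‖x_s‖ ε, where D_{x_i}‖x_s‖ is the one-sided directional derivative of a fixed norm ‖·‖ on ℝⁿ at x_s along x_i (so ‖x‖ = ‖x_i‖ε when x_s = 0). Then this function satisfies, under the lexicographic order on dual numbers: (i) ‖x‖ ≥ 0 with equality iff x = 0; (ii) ‖c x‖ = |c| ‖x‖ for every dual scalar c, where |a+bε| := |a| + sign(a) b ε for a ≠ 0 and |bε| := |b|ε; (iii) ‖x + y‖ ≤ ‖x‖ + ‖y‖. -/

import Mathlib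

open Filter Topology

/-- A norm on a real vector space. -/
def IsNorm {α : Type*} [AddCommGroup α] [Module ℝ α] (N : α → ℝ) : Prop :=
  (∀ x y, N (x + y) ≤ N x + N y) ∧ (∀ (c : ℝ) (x : α), N (c • x) = |c| * N x) ∧
    (∀ x, N x = 0 → x = 0)

/-- Lexicographic (total) order on dual numbers represented as pairs. -/
def dualLe (p q : ℝ × ℝ) : Prop := p.1 < q.1 ∨ (p.1 = q.1 ∧ p.2 ≤ q.2)

/-- Product of dual numbers (ε² = 0). -/
def dualMul (p q : ℝ × ℝ) : ℝ × ℝ := (p.1 * q.1, p.1 * q.2 + p.2 * q.1)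

/-- Absolute value of a dual number: `|a+bε| = |a| + sign(a) b ε` for `a ≠ 0`,
and `|bε| = |b|ε`. -/
noncomputable def dualAbs (c : ℝ × ℝ) : ℝ × ℝ :=
  if c.1 = 0 then (0, |c.2|) else (|c.1|, Real.sign c.1 * c.2)

section Aux

variable {n : ℕ} (N : (Fin n → ℝ) → ℝ)

lemma aux_norm_zero (hN : IsNorm N) : N 0 = 0 := by
  have := hN.2.1 0 0
  simpa using this

lemma aux_norm_nonneg (hN : IsNorm N) (x : Fin n → ℝ) : 0 ≤ N x := by
  have h1 := hN.1 x (-x)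
  have h2 : N (-x) = N x := by
    have := hN.2.1 (-1) x
    simpa using this
  have h0 : N (x + -x) = 0 := by rw [add_neg_cancel, aux_norm_zero N hN]
  nlinarith

lemma aux_D_zero (hN : IsNorm N) (D : (Fin n → ℝ) → (Fin n → ℝ) → ℝ)
    (hD : ∀ xs xi, Tendsto (fun t : ℝ => (N (xs + t • xi) - N xs) / t)
      (𝓝[>] 0) (𝓝 (D xs xi))) (xi : Fin n → ℝ) : D 0 xi = N xi := by
  have h : Tendsto (fun t : ℝ => (N ((0 : Fin n → ℝ) + t • xi) - N 0) / t)
      (𝓝[>] 0) (𝓝 (N xi)) := by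
    have hev : ∀ᶠ t : ℝ in 𝓝[>] 0,
        N xi = (N ((0 : Fin n → ℝ) + t • xi) - N 0) / t := by
      filter_upwards [self_mem_nhdsWithin] with t ht
      have ht' : (0:ℝ) < t := ht
      rw [zero_add, aux_norm_zero N hN, hN.2.1, abs_of_pos ht']
      field_simp
      ring
    exact Tendsto.congr' hev tendsto_const_nhds
  exact tendsto_nhds_unique (hD 0 xi) h

end Aux

/-- The dual continuation `‖x_s + x_i ε‖ := ‖x_s‖ + D_{x_i}‖x_s‖ ε` of a norm
on `ℝⁿ` (with one-sided directional derivative `D`) is a dual-valued vector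
norm: it is nonnegative and definite, absolutely homogeneous with respect to
dual scalars, and satisfies the triangle inequality, all in the lexicographic
order on dual numbers. -/
theorem dual_vector_norm {n : ℕ} (N : (Fin n → ℝ) → ℝ) (hN : IsNorm N)
    (D : (Fin n → ℝ) → (Fin n → ℝ) → ℝ)
    (hD : ∀ xs xi, Tendsto (fun t : ℝ => (N (xs + t • xi) - N xs) / t)
      (𝓝[>] 0) (𝓝 (D xs xi))) :
    (∀ x : (Fin n → ℝ) × (Fin n → ℝ),
      dualLe (0, 0) (N x.1, D x.1 x.2) ∧ ((N x.1, D x.1 x.2) = ((0 : ℝ), (0 : ℝ)) ↔ x = 0)) ∧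
    (∀ (c : ℝ × ℝ) (x : (Fin n → ℝ) × (Fin n → ℝ)),
      (N (c.1 • x.1), D (c.1 • x.1) (c.1 • x.2 + c.2 • x.1))
        = dualMul (dualAbs c) (N x.1, D x.1 x.2)) ∧
    (∀ x y : (Fin n → ℝ) × (Fin n → ℝ),
      dualLe (N (x.1 + y.1), D (x.1 + y.1) (x.2 + y.2))
        ((N x.1, D x.1 x.2) + (N y.1, D y.1 y.2))) := by
  refine ⟨?_, ?_, ?_⟩
  · -- positivity / definiteness
    intro x
    constructor
    · rcases eq_or_lt_of_le (aux_norm_nonneg N hN x.1) with h | h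
      · right
        refine ⟨h, ?_⟩
        have hx1 : x.1 = 0 := hN.2.2 _ h.symm
        rw [hx1, aux_D_zero N hN D hD]
        exact aux_norm_nonneg N hN x.2
      · left; exact h
    · constructor
      · intro h
        have h1 : N x.1 = 0 := congrArg Prod.fst h
        have h2 : D x.1 x.2 = 0 := congrArg Prod.snd h
        have hx1 : x.1 = 0 := hN.2.2 _ h1
        rw [hx1, aux_D_zero N hN D hD] at h2
        have hx2 : x.2 = 0 := hN.2.2 _ h2
        exact Prod.ext hx1 hx2
      · intro h
        rw [h]
        simp only [Prod.fst_zero, Prod.snd_zero]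
        rw [aux_norm_zero N hN, aux_D_zero N hN D hD, aux_norm_zero N hN]
  · -- homogeneity
    intro c x
    by_cases hc : c.1 = 0
    · have h2 : D 0 (c.2 • x.1) = |c.2| * N x.1 := by
        rw [aux_D_zero N hN D hD, hN.2.1]
      simp [Prod.ext_iff, dualMul, dualAbs, hc, h2, aux_norm_zero N hN]
    · simp only [dualAbs, if_neg hc, dualMul]
      set s := Real.sign c.1 with hs
      have hs1 : s = 1 ∨ s = -1 := (Real.sign_apply_eq_of_ne_zero c.1 hc).symm
      have hsc : s * c.1 = |c.1| := by
        rcases lt_trichotomy c.1 0 with h | h | h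
        · rw [hs, Real.sign_of_neg h, abs_of_neg h]; ring
        · exact absurd h hc
        · rw [hs, Real.sign_of_pos h, abs_of_pos h]; ring
      have key : Tendsto (fun t : ℝ =>
          (N (c.1 • x.1 + t • (c.1 • x.2 + c.2 • x.1)) - N (c.1 • x.1)) / t)
          (𝓝[>] 0) (𝓝 (|c.1| * D x.1 x.2 + s * c.2 * N x.1)) := by
        have hev : ∀ᶠ t : ℝ in 𝓝[>] 0, 0 < s * (c.1 + t * c.2) := by
          have hcont : Tendsto (fun t : ℝ => s * (c.1 + t * c.2)) (𝓝[>] 0) (𝓝 (s * c.1)) := by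
            apply Tendsto.mono_left _ nhdsWithin_le_nhds
            have hcts : Continuous (fun t : ℝ => s * (c.1 + t * c.2)) := by continuity
            simpa using hcts.tendsto 0
          have hpos : 0 < s * c.1 := by rw [hsc]; exact abs_pos.mpr hc
          exact hcont.eventually (eventually_gt_nhds hpos)
        set τ : ℝ → ℝ := fun t => t * c.1 / (c.1 + t * c.2) with hτ
        have hτtendsto : Tendsto τ (𝓝[>] 0) (𝓝[>] 0) := by
          rw [tendsto_nhdsWithin_iff]
          constructor
          · apply Tendsto.mono_left _ nhdsWithin_le_nhds
            have hca : ContinuousAt τ 0 := by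
              apply ContinuousAt.div
              · fun_prop
              · fun_prop
              · simpa using hc
            simpa [hτ] using hca.tendsto
          · filter_upwards [hev, self_mem_nhdsWithin] with t hst ht
            have ht' : (0:ℝ) < t := ht
            have hτpos : 0 < τ t := by
              rw [hτ]
              rcases hs1 with h | h <;> rw [h] at hst
              · have ha : 0 < c.1 + t * c.2 := by linarith
                have hc1 : 0 < c.1 := by rw [h] at hsc; nlinarith [abs_pos.mpr hc]
                exact div_pos (by positivity) ha
              · have ha : c.1 + t * c.2 < 0 := by linarith
                have hc1 : c.1 < 0 := by rw [h] at hsc; nlinarith [abs_pos.mpr hc]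
                exact div_pos_of_neg_of_neg (by nlinarith) ha
            exact hτpos
        have hQ : Tendsto (fun t : ℝ => (N (x.1 + τ t • x.2) - N x.1) / τ t)
            (𝓝[>] 0) (𝓝 (D x.1 x.2)) := (hD x.1 x.2).comp hτtendsto
        have hA : Tendsto (fun t : ℝ => |c.1 + t * c.2|) (𝓝[>] 0) (𝓝 |c.1|) := by
          apply Tendsto.mono_left _ nhdsWithin_le_nhds
          have hcts : Continuous (fun t : ℝ => |c.1 + t * c.2|) := by continuity
          simpa using hcts.tendsto 0
        have hB : Tendsto (fun t : ℝ => c.1 / (c.1 + t * c.2)) (𝓝[>] 0) (𝓝 1) := by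
          apply Tendsto.mono_left _ nhdsWithin_le_nhds
          have hca : ContinuousAt (fun t : ℝ => c.1 / (c.1 + t * c.2)) 0 := by
            apply ContinuousAt.div
            · fun_prop
            · fun_prop
            · simpa using hc
          have htt := hca.tendsto
          simp only [zero_mul, add_zero] at htt
          rw [div_self hc] at htt
          exact htt
        have hlim : Tendsto (fun t : ℝ =>
            |c.1 + t * c.2| * ((N (x.1 + τ t • x.2) - N x.1) / τ t) * (c.1 / (c.1 + t * c.2))
              + s * c.2 * N x.1)
            (𝓝[>] 0) (𝓝 (|c.1| * D x.1 x.2 + s * c.2 * N x.1)) := by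
          have hh := ((hA.mul hQ).mul hB).add
            (tendsto_const_nhds (x := s * c.2 * N x.1) (f := 𝓝[>] (0:ℝ)))
          simpa using hh
        apply Tendsto.congr' _ hlim
        filter_upwards [hev, self_mem_nhdsWithin] with t hst ht
        have ht' : (0:ℝ) < t := ht
        have ha0 : c.1 + t * c.2 ≠ 0 := by
          intro h; rw [h, mul_zero] at hst; exact lt_irrefl 0 hst
        have hsa : s * (c.1 + t * c.2) = |c.1 + t * c.2| := by
          rcases hs1 with h | h <;> rw [h] at hst ⊢
          · rw [abs_of_pos (by linarith)]; ring
          · rw [abs_of_neg (by linarith)]; ring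
        have hvec : c.1 • x.1 + t • (c.1 • x.2 + c.2 • x.1)
            = (c.1 + t * c.2) • (x.1 + τ t • x.2) := by
          funext i
          simp only [hτ, Pi.add_apply, Pi.smul_apply, smul_eq_mul]
          field_simp
          ring
        rw [hvec, hN.2.1, hN.2.1]
        set M := N (x.1 + τ t • x.2) with hM
        set K := N x.1 with hK
        rw [← hsa, ← hsc]
        simp only [hτ]
        field_simp
        ring
      have heq := tendsto_nhds_unique (hD (c.1 • x.1) (c.1 • x.2 + c.2 • x.1)) key
      refine Prod.ext ?_ ?_
      · simpa using hN.2.1 c.1 x.1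
      · exact heq.trans (by ring)
  · -- triangle inequality
    intro x y
    rcases eq_or_lt_of_le (hN.1 x.1 y.1) with h | h
    · right
      refine ⟨by simpa using h, ?_⟩
      simp only [Prod.snd_add]
      refine le_of_tendsto_of_tendsto (hD (x.1 + y.1) (x.2 + y.2))
        ((hD x.1 x.2).add (hD y.1 y.2)) ?_
      filter_upwards [self_mem_nhdsWithin] with t ht
      have ht' : (0:ℝ) < t := ht
      have htri : N (x.1 + y.1 + t • (x.2 + y.2)) ≤ N (x.1 + t • x.2) + N (y.1 + t • y.2) := by
        have hv : x.1 + y.1 + t • (x.2 + y.2) = (x.1 + t • x.2) + (y.1 + t • y.2) := by module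
        rw [hv]; exact hN.1 _ _
      have hnum : N (x.1 + y.1 + t • (x.2 + y.2)) - N (x.1 + y.1)
          ≤ (N (x.1 + t • x.2) - N x.1) + (N (y.1 + t • y.2) - N y.1) := by
        linarith
      calc (N (x.1 + y.1 + t • (x.2 + y.2)) - N (x.1 + y.1)) / t
          ≤ ((N (x.1 + t • x.2) - N x.1) + (N (y.1 + t • y.2) - N y.1)) / t := by gcongr
        _ = (N (x.1 + t • x.2) - N x.1) / t + (N (y.1 + t • y.2) - N y.1) / t := by
            rw [add_div]
    · left
      simpa using h
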